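/- arXiv:2310.08144 — 2 statements merged into one kernel-verified Lean document; each statement's English description precedes it below -/
import Mathlib

section
/- For every natural number x ≥ 1 and every natural number z ≥ 2, the number S of integers n with 1 ≤ n ≤ x divisible by no prime p < z satisfies |S − x·∏_{p prime, p < z}(1 − 1/p)| ≤ 2^{π(z)}, where π(z) is the number of primes ≤ z (equivalently, the number of divisors of P(z) bounds the total fractional-part error). -/
open Finset
open scoped Classical

private lemma erat_sum_pm (s : Finset ℕ) :
    (∑ m ∈ s.powerset, (-1 : ℝ) ^ m.card) = if s = ∅ then 1 else 0 := by
  have h := Finset.sum_powerset_neg_one_pow_card (x := s)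
  have h2 : ((∑ m ∈ s.powerset, (-1 : ℤ) ^ m.card : ℤ) : ℝ)
      = ∑ m ∈ s.powerset, (-1 : ℝ) ^ m.card := by push_cast; rfl
  rw [← h2, h]
  split_ifs <;> simp

/-- Classical sieve of Eratosthenes error estimate with explicit constant:
`|S − x ∏_{p<z} (1 − 1/p)| ≤ 2^{π(z)}`. -/
theorem eratosthenes_error_bound (x z : ℕ) (hx : 1 ≤ x) (hz : 2 ≤ z) :
    |((((Finset.Icc 1 x).filter
          (fun n => ∀ p : ℕ, p.Prime → p < z → ¬ p ∣ n)).card : ℝ)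
        - (x : ℝ) * ∏ p ∈ (Finset.range z).filter Nat.Prime, (1 - 1 / (p : ℝ)))|
      ≤ 2 ^ (Nat.primeCounting z) := by
  set P : Finset ℕ := (Finset.range z).filter Nat.Prime with hP
  have hPprime : ∀ p ∈ P, p.Prime := fun p hp => (Finset.mem_filter.1 hp).2
  have hdpos : ∀ T ∈ P.powerset, 0 < ∏ p ∈ T, p := by
    intro T hT
    exact Finset.prod_pos fun p hp => (hPprime p (Finset.mem_powerset.1 hT hp)).pos
  -- Step B : inclusion-exclusion for the count
  have hS : (((Finset.Icc 1 x).filter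
        (fun n => ∀ p : ℕ, p.Prime → p < z → ¬ p ∣ n)).card : ℝ)
      = ∑ T ∈ P.powerset, (-1 : ℝ)^T.card * ((x / ∏ p ∈ T, p : ℕ) : ℝ) := by
    have key : ∀ n ∈ Finset.Icc 1 x,
        (if (∀ p : ℕ, p.Prime → p < z → ¬ p ∣ n) then (1:ℝ) else 0)
        = ∑ T ∈ P.powerset, (-1:ℝ)^T.card * (if (∏ p ∈ T, p) ∣ n then 1 else 0) := by
      intro n hn
      have hcond : (∀ p : ℕ, p.Prime → p < z → ¬ p ∣ n) ↔ (P.filter (· ∣ n)) = ∅ := by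
        rw [Finset.filter_eq_empty_iff]
        constructor
        · intro h p hp
          rw [hP, Finset.mem_filter, Finset.mem_range] at hp
          exact h p hp.2 hp.1
        · intro h p hp hpz
          exact h (by rw [hP]; exact Finset.mem_filter.2 ⟨Finset.mem_range.2 hpz, hp⟩)
      rw [if_congr hcond rfl rfl, ← erat_sum_pm]
      have hsub : (P.filter (· ∣ n)).powerset ⊆ P.powerset :=
        Finset.powerset_mono.2 (Finset.filter_subset _ _)
      have step1 : (∑ T ∈ (P.filter (· ∣ n)).powerset, (-1:ℝ)^T.card)
          = ∑ T ∈ (P.filter (· ∣ n)).powerset,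
              (-1:ℝ)^T.card * (if (∏ p ∈ T, p) ∣ n then 1 else 0) := by
        refine Finset.sum_congr rfl fun T hT => ?_
        rw [Finset.mem_powerset] at hT
        have hdvd : (∏ p ∈ T, p) ∣ n := by
          refine Finset.prod_primes_dvd n (fun p hp => ?_) (fun p hp => ?_)
          · exact (hPprime p ((Finset.filter_subset _ _) (hT hp))).prime
          · exact (Finset.mem_filter.1 (hT hp)).2
        simp [hdvd]
      rw [step1]
      refine Finset.sum_subset hsub fun T hT hT' => ?_
      rw [Finset.mem_powerset] at hT hT'
      have : ¬ (∏ p ∈ T, p) ∣ n := by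
        intro hdvd
        apply hT'
        intro p hp
        exact Finset.mem_filter.2 ⟨hT hp, dvd_trans (Finset.dvd_prod_of_mem _ hp) hdvd⟩
      simp [this]
    calc (((Finset.Icc 1 x).filter
        (fun n => ∀ p : ℕ, p.Prime → p < z → ¬ p ∣ n)).card : ℝ)
        = ∑ n ∈ Finset.Icc 1 x,
            (if (∀ p : ℕ, p.Prime → p < z → ¬ p ∣ n) then (1:ℝ) else 0) := by
          rw [Finset.card_filter]; push_cast; rfl
      _ = ∑ n ∈ Finset.Icc 1 x, ∑ T ∈ P.powerset,
            (-1:ℝ)^T.card * (if (∏ p ∈ T, p) ∣ n then 1 else 0) :=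
          Finset.sum_congr rfl key
      _ = ∑ T ∈ P.powerset, ∑ n ∈ Finset.Icc 1 x,
            (-1:ℝ)^T.card * (if (∏ p ∈ T, p) ∣ n then 1 else 0) := Finset.sum_comm
      _ = ∑ T ∈ P.powerset, (-1 : ℝ)^T.card * ((x / ∏ p ∈ T, p : ℕ) : ℝ) := by
          refine Finset.sum_congr rfl fun T _ => ?_
          rw [← Finset.mul_sum]
          congr 1
          have : ∑ n ∈ Finset.Icc 1 x, (if (∏ p ∈ T, p) ∣ n then (1:ℝ) else 0)
              = (((Finset.Icc 1 x).filter (fun n => (∏ p ∈ T, p) ∣ n)).card : ℝ) := by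
            rw [Finset.card_filter]; push_cast; rfl
          rw [this]
          congr 1
          have h01 : Finset.Icc 1 x = Finset.Ioc 0 x := rfl
          rw [h01]
          exact_mod_cast Nat.Ioc_filter_dvd_card_eq_div x (∏ p ∈ T, p)
  -- Step C : expanding the product
  have hProd : (x : ℝ) * ∏ p ∈ P, (1 - 1 / (p : ℝ))
      = ∑ T ∈ P.powerset, (-1:ℝ)^T.card * ((x:ℝ) / ((∏ p ∈ T, p : ℕ) : ℝ)) := by
    have expand : ∏ p ∈ P, (1 - 1 / (p : ℝ))
        = ∑ T ∈ P.powerset, (-1:ℝ)^T.card / ((∏ p ∈ T, p : ℕ) : ℝ) := by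
      have h := Finset.prod_add (fun p : ℕ => -(1 / (p:ℝ))) (fun _ => (1:ℝ)) P
      simp only [Finset.prod_const_one, mul_one] at h
      have h2 : ∀ p ∈ P, -(1/(p:ℝ)) + 1 = 1 - 1/(p:ℝ) := fun p _ => by ring
      rw [Finset.prod_congr rfl h2] at h
      rw [h]
      refine Finset.sum_congr rfl fun T _ => ?_
      have : ∀ p ∈ T, -(1/(p:ℝ)) = (-1) * (1/(p:ℝ)) := fun p _ => by ring
      rw [Finset.prod_congr rfl this, Finset.prod_mul_distrib, Finset.prod_const,
        Nat.cast_prod]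
      simp [one_div, div_eq_mul_inv, Finset.prod_inv_distrib]
    rw [expand, Finset.mul_sum]
    refine Finset.sum_congr rfl fun T _ => ?_
    ring
  -- Step D : termwise bound
  rw [hS, hProd, ← Finset.sum_sub_distrib]
  have hbound : ∀ T ∈ P.powerset,
      |(-1:ℝ)^T.card * ((x / ∏ p ∈ T, p : ℕ) : ℝ)
        - (-1:ℝ)^T.card * ((x:ℝ) / ((∏ p ∈ T, p : ℕ) : ℝ))| ≤ 1 := by
    intro T hT
    set d : ℕ := ∏ p ∈ T, p with hd
    have hd0 : 0 < d := hdpos T hT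
    have hd0' : (0:ℝ) < (d:ℝ) := by exact_mod_cast hd0
    rw [← mul_sub, abs_mul, abs_pow, abs_neg, abs_one, one_pow, one_mul]
    rw [abs_sub_comm, abs_of_nonneg]
    · have hle : (x:ℝ) / d ≤ ((x / d : ℕ) : ℝ) + 1 := by
        rw [div_le_iff₀ hd0']
        have : x ≤ d * (x / d) + d := by
          conv_lhs => rw [← Nat.div_add_mod x d]
          exact Nat.add_le_add_left (le_of_lt (Nat.mod_lt _ hd0)) _
        calc (x:ℝ) ≤ ((d * (x / d) + d : ℕ) : ℝ) := by exact_mod_cast this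
          _ = (((x / d : ℕ) : ℝ) + 1) * (d:ℝ) := by push_cast; ring
      linarith
    · have := Nat.cast_div_le (m := x) (n := d) (α := ℝ)
      linarith
  calc |∑ T ∈ P.powerset, ((-1:ℝ)^T.card * ((x / ∏ p ∈ T, p : ℕ) : ℝ)
          - (-1:ℝ)^T.card * ((x:ℝ) / ((∏ p ∈ T, p : ℕ) : ℝ)))|
      ≤ ∑ T ∈ P.powerset, |(-1:ℝ)^T.card * ((x / ∏ p ∈ T, p : ℕ) : ℝ)
          - (-1:ℝ)^T.card * ((x:ℝ) / ((∏ p ∈ T, p : ℕ) : ℝ))| :=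
        Finset.abs_sum_le_sum_abs _ _
    _ ≤ ∑ T ∈ P.powerset, (1:ℝ) := Finset.sum_le_sum hbound
    _ = (P.powerset.card : ℝ) := by simp
    _ = (2:ℝ) ^ P.card := by rw [Finset.card_powerset]; push_cast; ring
    _ ≤ (2:ℝ) ^ (Nat.primeCounting z) := by
        have hcard : P.card = Nat.primeCounting' z := by
          rw [Nat.primeCounting', Nat.count_eq_card_filter_range]
        have hle : Nat.primeCounting' z ≤ Nat.primeCounting z := by
          rw [Nat.primeCounting]
          exact Nat.monotone_primeCounting' (Nat.le_succ z)
        rw [hcard]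
        exact pow_le_pow_right₀ (by norm_num) hle
end

section
/- For every positive integer x and every natural number z ≥ 2, the number S of integers n with 1 ≤ n ≤ x divisible by no prime p < z satisfies S = x·∏_{p prime, p < z}(1 − 1/p) + ∑_{p prime, p < z} ∑_{d ∣ Q(p)} μ(d)·{x/(d·p)}, where Q(p) = ∏_{q prime, q < p} q, μ is the Möbius function, and {y} = y − ⌊y⌋ denotes the fractional part. -/
open Finset ArithmeticFunction
open scoped Classical
open scoped ArithmeticFunction.Moebius

namespace SieveAux


lemma squarefree_prod_primes {s : Finset ℕ} (hs : ∀ p ∈ s, p.Prime) :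
    Squarefree (∏ p ∈ s, p) := by
  induction s using Finset.induction_on with
  | empty => simpa using squarefree_one
  | @insert a s ha ih =>
    rw [Finset.prod_insert ha]
    have hap : a.Prime := hs a (Finset.mem_insert_self a s)
    have hs' : ∀ p ∈ s, p.Prime := fun p hp => hs p (Finset.mem_insert_of_mem hp)
    have hcop : Nat.Coprime a (∏ p ∈ s, p) := by
      rw [Nat.Prime.coprime_iff_not_dvd hap]
      intro hdvd
      obtain ⟨q, hq, hqd⟩ := (Nat.Prime.prime hap).exists_mem_finset_dvd hdvd
      exact ha (((hs' q hq).dvd_iff_eq hap.ne_one).mp hqd ▸ hq)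
    exact (Nat.squarefree_mul hcop).mpr ⟨hap.squarefree, ih hs'⟩

def Qz (z : ℕ) : ℕ := ∏ q ∈ (Finset.range z).filter Nat.Prime, q

lemma Qz_pos (z : ℕ) : 0 < Qz z :=
  Finset.prod_pos fun p hp => (Finset.mem_filter.mp hp).2.pos

lemma squarefree_Qz (z : ℕ) : Squarefree (Qz z) :=
  squarefree_prod_primes fun p hp => (Finset.mem_filter.mp hp).2

lemma primeFactors_Qz (z : ℕ) :
    (Qz z).primeFactors = (Finset.range z).filter Nat.Prime :=
  Nat.primeFactors_prod fun p hp => (Finset.mem_filter.mp hp).2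

lemma prime_dvd_Qz {p z : ℕ} (hp : p.Prime) : p ∣ Qz z ↔ p < z := by
  have h : p ∈ (Qz z).primeFactors ↔ p < z := by
    rw [primeFactors_Qz]; simp [hp]
  rw [← h, Nat.mem_primeFactors_of_ne_zero (Qz_pos z).ne']
  simp [hp]

lemma coprime_Qz (n z : ℕ) :
    Nat.Coprime n (Qz z) ↔ ∀ p : ℕ, p.Prime → p < z → ¬ p ∣ n := by
  constructor
  · intro h p pp plt pdvd
    exact pp.not_dvd_one (h ▸ Nat.dvd_gcd pdvd ((prime_dvd_Qz pp).mpr plt))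
  · intro h
    by_contra hc
    obtain ⟨p, pp, pdvd⟩ := Nat.exists_prime_and_dvd hc
    exact h p pp ((prime_dvd_Qz pp).mp (pdvd.trans (Nat.gcd_dvd_right _ _)))
      (pdvd.trans (Nat.gcd_dvd_left _ _))


lemma sum_moebius_divisors (m : ℕ) :
    ∑ d ∈ m.divisors, μ d = if m = 1 then 1 else 0 := by
  rw [← coe_mul_zeta_apply, moebius_mul_coe_zeta, one_apply]

lemma gcd_divisors_eq (n z : ℕ) :
    (Nat.gcd n (Qz z)).divisors = (Qz z).divisors.filter (· ∣ n) := by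
  ext d
  simp only [Nat.mem_divisors, Finset.mem_filter, Nat.dvd_gcd_iff]
  constructor
  · rintro ⟨⟨h1, h2⟩, _⟩; exact ⟨⟨h2, (Qz_pos z).ne'⟩, h1⟩
  · rintro ⟨⟨h2, _⟩, h1⟩
    exact ⟨⟨h1, h2⟩, fun h => (Qz_pos z).ne' (Nat.eq_zero_of_gcd_eq_zero_right h)⟩

lemma legendre (N z : ℕ) :
    (((Finset.Icc 1 N).filter (fun n => ∀ p : ℕ, p.Prime → p < z → ¬ p ∣ n)).card : ℤ)
      = ∑ d ∈ (Qz z).divisors, μ d * (N / d : ℕ) := by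
  have h1 : (((Finset.Icc 1 N).filter (fun n => ∀ p : ℕ, p.Prime → p < z → ¬ p ∣ n)).card : ℤ)
      = ∑ n ∈ Finset.Icc 1 N, if Nat.Coprime n (Qz z) then (1 : ℤ) else 0 := by
    rw [Finset.sum_boole]
    congr 2
    exact Finset.filter_congr fun n _ => by rw [coprime_Qz]
  rw [h1]
  have h2 : ∀ n ∈ Finset.Icc 1 N, (if Nat.Coprime n (Qz z) then (1 : ℤ) else 0)
      = ∑ d ∈ (Qz z).divisors.filter (· ∣ n), μ d := by
    intro n _
    rw [← gcd_divisors_eq, sum_moebius_divisors]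
  rw [Finset.sum_congr rfl h2]
  simp_rw [Finset.sum_filter]
  rw [Finset.sum_comm]
  refine Finset.sum_congr rfl fun d _ => ?_
  rw [← Finset.sum_filter, Finset.sum_const, nsmul_eq_mul]
  have : Finset.Icc 1 N = Finset.Ioc 0 N := rfl
  rw [this]
  rw [Nat.Ioc_filter_dvd_card_eq_div]
  ring


lemma rest_eq (x z : ℕ) :
    (Finset.Icc 1 x).filter (fun n => ¬ ∀ p : ℕ, p.Prime → p < z → ¬ p ∣ n)
      = ((Finset.range z).filter Nat.Prime).biUnion
          (fun p => (Finset.Icc 1 x).filter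
            (fun n => p ∣ n ∧ ∀ q : ℕ, q.Prime → q < p → ¬ q ∣ n)) := by
  ext n
  simp only [Finset.mem_filter, Finset.mem_biUnion, Finset.mem_range]
  constructor
  · rintro ⟨hn, h⟩
    push_neg at h
    obtain ⟨p, pp, plt, pdvd⟩ := h
    have hn1 : n ≠ 1 := by
      rintro rfl
      exact pp.one_lt.ne' (Nat.eq_one_of_dvd_one pdvd) |>.elim
    refine ⟨n.minFac, ⟨?_, Nat.minFac_prime hn1⟩, hn, Nat.minFac_dvd n, ?_⟩
    · exact lt_of_le_of_lt (Nat.minFac_le_of_dvd pp.two_le pdvd) plt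
    · intro q hq hqlt hqdvd
      exact absurd (Nat.minFac_le_of_dvd hq.two_le hqdvd) (not_le.mpr hqlt)
  · rintro ⟨p, ⟨plt, pp⟩, hn, pdvd, -⟩
    exact ⟨hn, fun h => h p pp plt pdvd⟩

lemma pieces_disjoint (x z : ℕ) :
    ∀ p ∈ (Finset.range z).filter Nat.Prime, ∀ p' ∈ (Finset.range z).filter Nat.Prime,
      p ≠ p' → Disjoint
        ((Finset.Icc 1 x).filter (fun n => p ∣ n ∧ ∀ q : ℕ, q.Prime → q < p → ¬ q ∣ n))
        ((Finset.Icc 1 x).filter (fun n => p' ∣ n ∧ ∀ q : ℕ, q.Prime → q < p' → ¬ q ∣ n)) := by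
  intro p hp p' hp' hne
  rw [Finset.disjoint_left]
  intro n h1 h2
  rw [Finset.mem_filter] at h1 h2
  obtain ⟨-, hpd, hpmin⟩ := h1
  obtain ⟨-, hpd', hpmin'⟩ := h2
  rcases hne.lt_or_gt with h | h
  · exact hpmin' p (Finset.mem_filter.mp hp).2 h hpd
  · exact hpmin p' (Finset.mem_filter.mp hp').2 h hpd'

lemma partition (x z : ℕ) :
    x = ((Finset.Icc 1 x).filter (fun n => ∀ p : ℕ, p.Prime → p < z → ¬ p ∣ n)).card
        + ∑ p ∈ (Finset.range z).filter Nat.Prime,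
            ((Finset.Icc 1 x).filter
              (fun n => p ∣ n ∧ ∀ q : ℕ, q.Prime → q < p → ¬ q ∣ n)).card := by
  have h := Finset.card_filter_add_card_filter_not
    (s := Finset.Icc 1 x) (p := fun n => ∀ p : ℕ, p.Prime → p < z → ¬ p ∣ n)
  rw [Nat.card_Icc] at h
  simp only [Nat.add_sub_cancel] at h
  rw [rest_eq, Finset.card_biUnion (pieces_disjoint x z)] at h
  omega

lemma piece_card (x p : ℕ) (hp : p.Prime) :
    ((Finset.Icc 1 x).filter (fun n => p ∣ n ∧ ∀ q : ℕ, q.Prime → q < p → ¬ q ∣ n)).card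
      = ((Finset.Icc 1 (x / p)).filter (fun m => ∀ q : ℕ, q.Prime → q < p → ¬ q ∣ m)).card := by
  apply Finset.card_nbij' (fun n => n / p) (fun m => p * m)
  · intro n hn
    rw [Finset.mem_coe, Finset.mem_filter, Finset.mem_Icc] at hn ⊢
    obtain ⟨⟨hn1, hnx⟩, hpd, hmin⟩ := hn
    refine ⟨⟨?_, Nat.div_le_div_right hnx⟩, ?_⟩
    · exact (Nat.one_le_div_iff hp.pos).mpr (Nat.le_of_dvd (by omega) hpd)
    · intro q hq hqlt hqdvd
      exact hmin q hq hqlt (hqdvd.trans (Nat.div_dvd_of_dvd hpd))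
  · intro m hm
    rw [Finset.mem_coe, Finset.mem_filter, Finset.mem_Icc] at hm ⊢
    obtain ⟨⟨hm1, hmx⟩, hmin⟩ := hm
    refine ⟨⟨Nat.one_le_iff_ne_zero.mpr (Nat.mul_ne_zero hp.pos.ne' (by omega)), ?_⟩, dvd_mul_right p m, ?_⟩
    · calc p * m = m * p := mul_comm _ _
        _ ≤ x := (Nat.le_div_iff_mul_le hp.pos).mp hmx
    · intro q hq hqlt hqdvd
      rcases (Nat.Prime.dvd_mul hq).mp hqdvd with h | h
      · exact absurd ((Nat.prime_dvd_prime_iff_eq hq hp).mp h) hqlt.ne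
      · exact hmin q hq hqlt h
  · intro n hn
    rw [Finset.mem_coe, Finset.mem_filter] at hn
    exact Nat.mul_div_cancel' hn.2.1
  · intro m _
    exact Nat.mul_div_cancel_left m hp.pos


/-- The arithmetic function `d ↦ (d : ℝ)⁻¹`. -/
noncomputable def finv : ArithmeticFunction ℝ := ⟨fun d => (d : ℝ)⁻¹, by simp⟩

lemma finv_apply (d : ℕ) : finv d = (d : ℝ)⁻¹ := rfl

lemma finv_mult : finv.IsMultiplicative := by
  refine ⟨by simp [finv_apply], fun {m n} _ => ?_⟩
  simp only [finv_apply, Nat.cast_mul]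
  rw [mul_inv]

lemma moebius_div_sum (z : ℕ) :
    ∑ d ∈ (Qz z).divisors, (μ d : ℝ) * (d : ℝ)⁻¹
      = ∏ q ∈ (Finset.range z).filter Nat.Prime, (1 - (q : ℝ)⁻¹) := by
  have h := ArithmeticFunction.IsMultiplicative.prodPrimeFactors_one_sub_of_squarefree
    finv finv_mult (squarefree_Qz z)
  rw [primeFactors_Qz] at h
  simp only [finv_apply] at h
  exact h.symm

lemma telescope (z : ℕ) :
    ∑ p ∈ (Finset.range z).filter Nat.Prime,
        (p : ℝ)⁻¹ * ∏ q ∈ (Finset.range p).filter Nat.Prime, (1 - (q : ℝ)⁻¹)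
      = 1 - ∏ p ∈ (Finset.range z).filter Nat.Prime, (1 - (p : ℝ)⁻¹) := by
  induction z with
  | zero => simp
  | succ z ih =>
    rw [Finset.range_add_one, Finset.filter_insert]
    by_cases hz : z.Prime
    · rw [if_pos hz]
      have hnotmem : z ∉ (Finset.range z).filter Nat.Prime := by
        simp [Finset.mem_filter]
      rw [Finset.sum_insert hnotmem, Finset.prod_insert hnotmem, ih]
      ring
    · rw [if_neg hz, ih]

lemma natdiv_cast_eq (x m : ℕ) (hm : 0 < m) :
    ((x / m : ℕ) : ℝ) = (x : ℝ) / (m : ℝ) - Int.fract ((x : ℝ) / (m : ℝ)) := by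
  have hy : (0 : ℝ) ≤ (x : ℝ) / (m : ℝ) := by positivity
  rw [Int.self_sub_fract]
  rw [← natCast_floor_eq_intCast_floor hy, Nat.floor_div_natCast, Nat.floor_natCast]

end SieveAux

/-- Exact sieve identity with fractional parts:
`S = x ∏_{p<z} (1 − 1/p) + ∑_{p<z} ∑_{d ∣ Q(p)} μ(d) {x/(dp)}`,
where `Q(p)` is the product of the primes `q < p` and `{y}` is the
fractional part. -/
theorem sieve_exact_identity (x z : ℕ) (hx : 0 < x) (hz : 2 ≤ z) :
    ((((Finset.Icc 1 x).filter
        (fun n => ∀ p : ℕ, p.Prime → p < z → ¬ p ∣ n)).card : ℝ)) =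
      (x : ℝ) * ∏ p ∈ (Finset.range z).filter Nat.Prime, (1 - 1 / (p : ℝ))
        + ∑ p ∈ (Finset.range z).filter Nat.Prime,
            ∑ d ∈ (∏ q ∈ (Finset.range p).filter Nat.Prime, q).divisors,
              (ArithmeticFunction.moebius d : ℝ) *
                Int.fract ((x : ℝ) / ((d : ℝ) * (p : ℝ))) := by
  have hQ : ∀ p : ℕ, (∏ q ∈ (Finset.range p).filter Nat.Prime, q) = SieveAux.Qz p :=
    fun _ => rfl
  simp only [hQ, one_div]
  -- per-prime identity
  have key : ∀ p ∈ (Finset.range z).filter Nat.Prime,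
      ((((Finset.Icc 1 x).filter
          (fun n => p ∣ n ∧ ∀ q : ℕ, q.Prime → q < p → ¬ q ∣ n)).card : ℝ))
        = (x : ℝ) * (p : ℝ)⁻¹ * ∏ q ∈ (Finset.range p).filter Nat.Prime, (1 - (q : ℝ)⁻¹)
          - ∑ d ∈ (SieveAux.Qz p).divisors,
              (μ d : ℝ) * Int.fract ((x : ℝ) / ((d : ℝ) * (p : ℝ))) := by
    intro p hp
    have pp : p.Prime := (Finset.mem_filter.mp hp).2
    have h1 := SieveAux.piece_card x p pp
    have h2 := SieveAux.legendre (x / p) p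
    have hdd : ∀ d : ℕ, x / p / d = x / (d * p) := fun d => by
      rw [Nat.div_div_eq_div_mul, mul_comm]
    have h3 : ((((Finset.Icc 1 x).filter
        (fun n => p ∣ n ∧ ∀ q : ℕ, q.Prime → q < p → ¬ q ∣ n)).card : ℝ))
        = ∑ d ∈ (SieveAux.Qz p).divisors, (μ d : ℝ) * ((x / (d * p) : ℕ) : ℝ) := by
      have hz2 : ((((Finset.Icc 1 x).filter
          (fun n => p ∣ n ∧ ∀ q : ℕ, q.Prime → q < p → ¬ q ∣ n)).card : ℤ))
          = ∑ d ∈ (SieveAux.Qz p).divisors, μ d * (x / (d * p) : ℕ) := by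
        rw [h1]
        simp_rw [← hdd]
        exact h2
      have hr := congrArg (fun t : ℤ => (t : ℝ)) hz2
      push_cast at hr
      exact hr
    rw [h3]
    have h4 : ∀ d ∈ (SieveAux.Qz p).divisors,
        (μ d : ℝ) * ((x / (d * p) : ℕ) : ℝ)
          = (x : ℝ) * (p : ℝ)⁻¹ * ((μ d : ℝ) * (d : ℝ)⁻¹)
            - (μ d : ℝ) * Int.fract ((x : ℝ) / ((d : ℝ) * (p : ℝ))) := by
      intro d hd
      have hd0 : 0 < d := Nat.pos_of_mem_divisors hd
      have hm : 0 < d * p := Nat.mul_pos hd0 pp.pos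
      rw [SieveAux.natdiv_cast_eq x (d * p) hm]
      push_cast
      rw [mul_sub]
      congr 1
      rw [div_eq_mul_inv, mul_inv]
      ring
    rw [Finset.sum_congr rfl h4, Finset.sum_sub_distrib, ← Finset.mul_sum,
      SieveAux.moebius_div_sum p]
  -- partition identity cast to ℝ
  have hpart : (x : ℝ)
      = ((((Finset.Icc 1 x).filter
          (fun n => ∀ p : ℕ, p.Prime → p < z → ¬ p ∣ n)).card : ℝ))
        + ∑ p ∈ (Finset.range z).filter Nat.Prime,
            ((((Finset.Icc 1 x).filter
              (fun n => p ∣ n ∧ ∀ q : ℕ, q.Prime → q < p → ¬ q ∣ n)).card : ℝ)) := by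
    exact_mod_cast congrArg (Nat.cast : ℕ → ℝ) (SieveAux.partition x z)
  rw [Finset.sum_congr rfl key, Finset.sum_sub_distrib] at hpart
  have h5 : ∑ p ∈ (Finset.range z).filter Nat.Prime,
      (x : ℝ) * (p : ℝ)⁻¹ * ∏ q ∈ (Finset.range p).filter Nat.Prime, (1 - (q : ℝ)⁻¹)
      = (x : ℝ) * (1 - ∏ p ∈ (Finset.range z).filter Nat.Prime, (1 - (p : ℝ)⁻¹)) := by
    rw [← SieveAux.telescope z, Finset.mul_sum]
    exact Finset.sum_congr rfl fun p _ => by ring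
  rw [h5] at hpart
  linarith [hpart]
end
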